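/- Let p be an odd prime and let d, e, f be positive integers with f ≤ e ≤ d + f, and let G = M₁(p,d,e,f) with canonical generators a, b. Then G is p^{e−f}-abelian, i.e. (xy)^{p^{e−f}} = x^{p^{e−f}} y^{p^{e−f}} for all x, y ∈ G, and the center of G equals the subgroup generated by a^{p^{e−f}} and b^{p^{e−f}}. -/

import Mathlib

/-- Relators for the group `M₁(p,d,e,f) = ⟨a, b ∣ a^(p^e) = b^(p^d) = 1, b⁻¹ab = a^(1+p^f)⟩`,
where `a` is generator `0` and `b` is generator `1`. -/
def M1rels (p d e f : ℕ) : Set (FreeGroup (Fin 2)) :=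
  {FreeGroup.of 0 ^ p ^ e, FreeGroup.of 1 ^ p ^ d,
    (FreeGroup.of 1)⁻¹ * FreeGroup.of 0 * FreeGroup.of 1 * (FreeGroup.of 0 ^ (1 + p ^ f))⁻¹}

/-- The metacyclic group `M₁(p,d,e,f) = ⟨a, b ∣ a^(p^e) = b^(p^d) = 1, b⁻¹ab = a^(1+p^f)⟩`. -/
abbrev M1 (p d e f : ℕ) : Type := PresentedGroup (M1rels p d e f)

/-- The canonical generator `a` of `M₁(p,d,e,f)`. -/
def M1a (p d e f : ℕ) : M1 p d e f := PresentedGroup.of 0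

/-- The canonical generator `b` of `M₁(p,d,e,f)`. -/
def M1b (p d e f : ℕ) : M1 p d e f := PresentedGroup.of 1

/-- Relators for the group `M₂(p,d,e,f) = ⟨a, b ∣ a^(p^d) = b^(p^e) = 1, b⁻¹ab = a^(1+p^f)⟩`,
where `a` is generator `0` and `b` is generator `1`. -/
def M2rels (p d e f : ℕ) : Set (FreeGroup (Fin 2)) :=
  {FreeGroup.of 0 ^ p ^ d, FreeGroup.of 1 ^ p ^ e,
    (FreeGroup.of 1)⁻¹ * FreeGroup.of 0 * FreeGroup.of 1 * (FreeGroup.of 0 ^ (1 + p ^ f))⁻¹}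

/-- The metacyclic group `M₂(p,d,e,f) = ⟨a, b ∣ a^(p^d) = b^(p^e) = 1, b⁻¹ab = a^(1+p^f)⟩`. -/
abbrev M2 (p d e f : ℕ) : Type := PresentedGroup (M2rels p d e f)

/-- The canonical generator `a` of `M₂(p,d,e,f)`. -/
def M2a (p d e f : ℕ) : M2 p d e f := PresentedGroup.of 0

/-- The canonical generator `b` of `M₂(p,d,e,f)`. -/
def M2b (p d e f : ℕ) : M2 p d e f := PresentedGroup.of 1

/-- Relators for the group
`M₃(p,d,e,h,f) = ⟨a, b ∣ a^(p^h) = 1, b^(p^(d+e-h)) = a^(p^d), b⁻¹ab = a^(1+p^f)⟩`,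
where `a` is generator `0` and `b` is generator `1`. -/
def M3rels (p d e h f : ℕ) : Set (FreeGroup (Fin 2)) :=
  {FreeGroup.of 0 ^ p ^ h, FreeGroup.of 1 ^ p ^ (d + e - h) * (FreeGroup.of 0 ^ p ^ d)⁻¹,
    (FreeGroup.of 1)⁻¹ * FreeGroup.of 0 * FreeGroup.of 1 * (FreeGroup.of 0 ^ (1 + p ^ f))⁻¹}

/-- The non-split metacyclic group
`M₃(p,d,e,h,f) = ⟨a, b ∣ a^(p^h) = 1, b^(p^(d+e-h)) = a^(p^d), b⁻¹ab = a^(1+p^f)⟩`. -/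
abbrev M3 (p d e h f : ℕ) : Type := PresentedGroup (M3rels p d e h f)

/-- The canonical generator `a` of `M₃(p,d,e,h,f)`. -/
def M3a (p d e h f : ℕ) : M3 p d e h f := PresentedGroup.of 0

/-- The canonical generator `b` of `M₃(p,d,e,h,f)`. -/
def M3b (p d e h f : ℕ) : M3 p d e h f := PresentedGroup.of 1

/-- `(α, β)` is an exact `(m,n)`-bicyclic pair of `G`: `α` has order `m`, `β` has order `n`,
`⟨α⟩ ∩ ⟨β⟩ = 1`, and `G = ⟨α⟩⟨β⟩`. -/
def IsExactBicyclicPair {G : Type*} [Group G] (m n : ℕ) (α β : G) : Prop :=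
  orderOf α = m ∧ orderOf β = n ∧
    Subgroup.zpowers α ⊓ Subgroup.zpowers β = ⊥ ∧
    ∀ g : G, ∃ i j : ℤ, g = α ^ i * β ^ j

section Stmt4Aux
open Finset

private lemma binom2 (u : ℕ) (x : ℤ) : ∃ C : ℤ, (1+x)^u = 1 + u*x + x^2*C := by
  induction u with
  | zero => exact ⟨0, by push_cast; ring⟩
  | succ n ih =>
    obtain ⟨C, hC⟩ := ih
    exact ⟨C + n + x*C, by rw [pow_succ, hC]; push_cast; ring⟩

private lemma binomp {p : ℕ} (hp : p.Prime) (x : ℤ) :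
    ∃ C : ℤ, (1+x)^p = 1 + p*x + p*x^2*C + x^p := by
  obtain ⟨q, rfl⟩ : ∃ q, p = q + 2 := ⟨p - 2, by have := hp.two_le; omega⟩
  have expand : (1+x)^(q+2) = ∑ k ∈ range (q+2+1), x ^ k * ((q+2).choose k : ℤ) := by
    rw [add_comm (1:ℤ) x, add_pow]
    simp
  have hdvd : ((q:ℤ)+2)*x^2 ∣ ∑ k ∈ range q, x ^ (k+2) * ((q+2).choose (k+2) : ℤ) := by
    refine Finset.dvd_sum fun k hk => ?_
    simp only [mem_range] at hk
    have hd : ((q:ℤ)+2) ∣ ((q+2).choose (k+2) : ℤ) := by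
      have := Nat.Prime.dvd_choose_self hp (show k+2 ≠ 0 by omega) (by omega)
      exact_mod_cast Int.natCast_dvd_natCast.2 this
    obtain ⟨c, hc⟩ := hd
    exact ⟨x^k * c, by rw [hc]; ring⟩
  obtain ⟨C, hC⟩ := hdvd
  refine ⟨C, ?_⟩
  rw [expand, Finset.sum_range_succ', Finset.sum_range_succ', Finset.sum_range_succ, hC]
  simp [Nat.choose_self, Nat.choose_one_right]
  push_cast
  ring

private lemma powp {p : ℕ} (hp : p.Prime) (hodd : Odd p) {m : ℕ} (hm : 1 ≤ m) (c : ℤ) :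
    ∃ t : ℤ, (1+(p:ℤ)^m*c)^p = 1 + (p:ℤ)^(m+1)*(c + p*t) := by
  have h3 : 3 ≤ p := by have h2 := hp.two_le; obtain ⟨j, hj⟩ := hodd; omega
  obtain ⟨m', rfl⟩ : ∃ m', m = m'+1 := ⟨m-1, by omega⟩
  obtain ⟨C, hC⟩ := binomp hp ((p:ℤ)^(m'+1)*c)
  obtain ⟨w, hw⟩ : ∃ w, (m'+1)*p = (m'+1+1) + 1 + w := ⟨(m'+1)*p - m' - 3, by have := Nat.mul_le_mul_left (m'+1) h3; omega⟩
  refine ⟨(p:ℤ)^m'*c^2*C + (p:ℤ)^w*c^p, ?_⟩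
  rw [hC]
  have e2 : ((p:ℤ)^(m'+1)*c)^p = (p:ℤ)^(m'+1+1)*((p:ℤ)*((p:ℤ)^w*c^p)) := by
    rw [mul_pow, ← pow_mul, hw, pow_add, pow_add]; ring
  rw [e2]; ring

private lemma rpow {p : ℕ} (hp : p.Prime) (hodd : Odd p) {f : ℕ} (hf : 1 ≤ f) (c : ℤ) :
    ∀ k : ℕ, ∃ c' : ℤ, (1+(p:ℤ)^f*c)^(p^k) = 1 + (p:ℤ)^(f+k)*c' ∧ (p:ℤ) ∣ c' - c := by
  intro k
  induction k with
  | zero => exact ⟨c, by simp, by simp⟩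
  | succ k ih =>
    obtain ⟨c', hc', hd⟩ := ih
    obtain ⟨t, ht⟩ := powp hp hodd (show 1 ≤ f + k by omega) c'
    refine ⟨c' + p*t, ?_, ?_⟩
    · rw [pow_succ, pow_mul, hc', ht]
      ring_nf
    · obtain ⟨s, hs⟩ := hd
      exact ⟨s + t, by rw [show c' + p*t - c = (c' - c) + p*t by ring, hs]; ring⟩

private lemma geomsum_split (x : ℤ) (m q : ℕ) :
    ∑ t ∈ range (m*q), x^t = (∑ t ∈ range m, x^t) * (∑ s ∈ range q, (x^m)^s) := by
  induction q with
  | zero => simp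
  | succ q ih =>
    rw [Nat.mul_succ, Finset.sum_range_add, ih, Finset.sum_range_succ]
    have : ∀ i, x ^ (m*q + i) = x^(m*q) * x^i := fun i => pow_add x _ i
    simp_rw [this, ← Finset.mul_sum, ← pow_mul]
    ring

private lemma geomsum_binom (u : ℕ) (y : ℤ) :
    ∃ C : ℤ, ∑ q ∈ range u, (1+y)^q = u + (∑ q ∈ range u, (q:ℤ))*y + y^2*C := by
  induction u with
  | zero => exact ⟨0, by simp⟩
  | succ n ih =>
    obtain ⟨C, hC⟩ := ih
    obtain ⟨C', hC'⟩ := binom2 n y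
    refine ⟨C + C', ?_⟩
    rw [Finset.sum_range_succ, hC, hC', Finset.sum_range_succ]
    push_cast
    ring

private lemma geomKey {p : ℕ} (hp : p.Prime) (hodd : Odd p) {f : ℕ} (hf : 1 ≤ f) (c : ℤ) :
    ∀ k : ℕ, (p:ℤ)^(f+k) ∣ (∑ t ∈ range (p^k), (1+(p:ℤ)^f*c)^t) - p^k := by
  obtain ⟨g, rfl⟩ : ∃ g, f = g+1 := ⟨f-1, by omega⟩
  intro k
  induction k with
  | zero => simp
  | succ k ih =>
    obtain ⟨A, hA⟩ := ih
    obtain ⟨c₁, hc₁, _⟩ := rpow hp hodd hf c k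
    obtain ⟨C, hC⟩ := geomsum_binom p ((p:ℤ)^(g+1+k)*c₁)
    have hS : ∃ S' : ℤ, (∑ q ∈ range p, (q:ℤ)) = (p:ℤ) * S' := by
      have h2 : 2 ∣ p - 1 := by obtain ⟨j, hj⟩ := hodd; omega
      refine ⟨(((p-1)/2 : ℕ) : ℤ), ?_⟩
      have hnat : (∑ q ∈ range p, q) = p * ((p-1)/2) := by
        rw [Finset.sum_range_id, Nat.mul_div_assoc p h2]
      calc (∑ q ∈ range p, (q:ℤ)) = ((∑ q ∈ range p, q : ℕ) : ℤ) := by push_cast; rfl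
        _ = _ := by rw [hnat]; push_cast; ring
    obtain ⟨S', hS'⟩ := hS
    set D : ℤ := S'*c₁ + (p:ℤ)^(g+k)*c₁^2*C with hD
    have hinner : ∑ s ∈ range p, ((1+(p:ℤ)^(g+1)*c)^(p^k))^s
        = p + (p:ℤ)^(g+k+2) * D := by
      rw [hc₁, hC, hS', hD]
      ring
    have hsplit : ∑ t ∈ range (p^(k+1)), (1+(p:ℤ)^(g+1)*c)^t
        = (∑ t ∈ range (p^k), (1+(p:ℤ)^(g+1)*c)^t) * (∑ s ∈ range p, ((1+(p:ℤ)^(g+1)*c)^(p^k))^s) := by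
      rw [← geomsum_split, pow_succ]
    have houter : (∑ t ∈ range (p^k), (1+(p:ℤ)^(g+1)*c)^t) = (p:ℤ)^k + (p:ℤ)^(g+1+k) * A := by
      linarith [hA]
    refine ⟨(p:ℤ)^k * D + A + (p:ℤ)^(g+1+k)*A*D, ?_⟩
    rw [hsplit, houter, hinner]
    ring

private lemma lteHard {p : ℕ} (hp : p.Prime) (hodd : Odd p) {f e : ℕ} (hf : 1 ≤ f)
    (hfe : f ≤ e) (m : ℕ) (h : (p:ℤ)^e ∣ (1+(p:ℤ)^f)^m - 1) : p^(e-f) ∣ m := by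
  rcases Nat.eq_zero_or_pos m with rfl | hm
  · exact dvd_zero _
  set k := m.factorization p with hk
  set u := m / p^k with hu
  have hmk : p^k * u = m := Nat.ordProj_mul_ordCompl_eq_self m p
  have hpu : ¬ p ∣ u := Nat.not_dvd_ordCompl hp hm.ne'
  by_contra hcon
  have hkef : k < e - f := by
    by_contra hge
    push_neg at hge
    exact hcon (dvd_trans (pow_dvd_pow p hge) ⟨u, hmk.symm⟩)
  obtain ⟨c₁, hc₁, hd₁⟩ := rpow hp hodd hf (1:ℤ) k
  have hpc₁ : ¬ (p:ℤ) ∣ c₁ := by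
    intro hdc
    have h1 : (p:ℤ) ∣ 1 := by
      have := dvd_sub hdc hd₁
      simpa using this
    have h2 := Int.le_of_dvd one_pos h1
    have h3 := hp.two_le
    omega
  obtain ⟨C, hC⟩ := binom2 u ((p:ℤ)^(f+k)*c₁)
  have hmain : (1+(p:ℤ)^f)^m - 1 = (p:ℤ)^(f+k) * (u*c₁ + (p:ℤ)^(f+k)*c₁^2*C) := by
    have : (1+(p:ℤ)^f)^m = ((1+(p:ℤ)^f)^(p^k))^u := by rw [← pow_mul, hmk]
    rw [this]
    have : ((1:ℤ)+(p:ℤ)^f)^(p^k) = 1 + (p:ℤ)^(f+k)*c₁ := by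
      have := hc₁; simpa using this
    rw [this, hC]
    ring
  rw [hmain] at h
  have hdd : (p:ℤ)^(f+k)*(p:ℤ) ∣ (p:ℤ)^(f+k) * (u*c₁ + (p:ℤ)^(f+k)*c₁^2*C) := by
    refine dvd_trans ?_ h
    rw [← pow_succ]
    exact pow_dvd_pow _ (by omega)
  have hpw : (p:ℤ) ∣ u*c₁ + (p:ℤ)^(f+k)*c₁^2*C :=
    (mul_dvd_mul_iff_left (a := (p:ℤ)^(f+k)) (pow_ne_zero _ (by exact_mod_cast hp.ne_zero))).mp hdd
  have hX : (p:ℤ) ∣ (p:ℤ)^(f+k)*c₁^2*C :=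
    Dvd.dvd.mul_right (Dvd.dvd.mul_right (dvd_pow_self _ (by omega)) _) _
  have hpuc : (p:ℤ) ∣ (u:ℤ)*c₁ := by
    have := dvd_sub hpw hX
    simpa using this
  rcases (Nat.prime_iff_prime_int.1 hp).2.2 _ _ hpuc with hu' | hc'
  · exact hpu (Int.natCast_dvd_natCast.mp hu')
  · exact hpc₁ hc'

-- relator lemmas
private lemma M1rel_mk {p d e f : ℕ} {r : FreeGroup (Fin 2)} (hr : r ∈ M1rels p d e f) :
    PresentedGroup.mk (M1rels p d e f) r = 1 :=
  (QuotientGroup.eq_one_iff _).2 (Subgroup.subset_normalClosure hr)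

private lemma M1rel_a (p d e f : ℕ) : (M1a p d e f) ^ (p ^ e) = 1 := by
  have := M1rel_mk (p := p) (d := d) (e := e) (f := f)
    (r := FreeGroup.of 0 ^ p ^ e) (Set.mem_insert _ _)
  simpa [M1a, PresentedGroup.of, map_pow] using this

private lemma M1rel_b (p d e f : ℕ) : (M1b p d e f) ^ (p ^ d) = 1 := by
  have := M1rel_mk (p := p) (d := d) (e := e) (f := f)
    (r := FreeGroup.of 1 ^ p ^ d) (Set.mem_insert_of_mem _ (Set.mem_insert _ _))
  simpa [M1b, PresentedGroup.of, map_pow] using this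

private lemma M1rel_conj (p d e f : ℕ) :
    (M1b p d e f)⁻¹ * M1a p d e f * M1b p d e f = (M1a p d e f) ^ (1 + p ^ f) := by
  have := M1rel_mk (p := p) (d := d) (e := e) (f := f)
    (r := (FreeGroup.of 1)⁻¹ * FreeGroup.of 0 * FreeGroup.of 1 * (FreeGroup.of 0 ^ (1 + p ^ f))⁻¹)
    (Set.mem_insert_of_mem _ (Set.mem_insert_of_mem _ rfl))
  simp only [map_mul, map_inv, map_pow] at this
  have h : (M1b p d e f)⁻¹ * M1a p d e f * M1b p d e f *
      ((M1a p d e f) ^ (1 + p ^ f))⁻¹ = 1 := this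
  exact mul_inv_eq_one.mp h

-- single-step conjugation, integer exponents
private lemma conj_b_one (p d e f : ℕ) (i : ℤ) :
    (M1b p d e f)⁻¹ * (M1a p d e f) ^ i * M1b p d e f
      = (M1a p d e f) ^ (i * ((1 + p ^ f : ℕ) : ℤ)) := by
  have hconj := M1rel_conj p d e f
  have h1 : ((M1b p d e f)⁻¹ * M1a p d e f * ((M1b p d e f)⁻¹)⁻¹) ^ i
      = (M1b p d e f)⁻¹ * (M1a p d e f) ^ i * ((M1b p d e f)⁻¹)⁻¹ := conj_zpow
  rw [inv_inv] at h1
  rw [← h1, hconj, ← zpow_natCast (M1a p d e f) (1 + p ^ f), ← zpow_mul, mul_comm]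

private lemma conj_b_pow (p d e f : ℕ) (j : ℕ) (i : ℤ) :
    ((M1b p d e f) ^ j)⁻¹ * (M1a p d e f) ^ i * (M1b p d e f) ^ j
      = (M1a p d e f) ^ (i * ((1 + p ^ f : ℕ) : ℤ) ^ j) := by
  induction j with
  | zero => simp
  | succ j ih =>
    have : ((M1b p d e f) ^ (j+1))⁻¹ * (M1a p d e f) ^ i * (M1b p d e f) ^ (j+1)
        = (M1b p d e f)⁻¹ * (((M1b p d e f) ^ j)⁻¹ * (M1a p d e f) ^ i * (M1b p d e f) ^ j)
          * M1b p d e f := by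
      rw [pow_succ, mul_inv_rev]
      group
    rw [this, ih, conj_b_one, mul_assoc, ← pow_succ]

private lemma swap_ab (p d e f : ℕ) (j : ℕ) (i : ℤ) :
    (M1a p d e f) ^ i * (M1b p d e f) ^ j
      = (M1b p d e f) ^ j * (M1a p d e f) ^ (i * ((1 + p ^ f : ℕ) : ℤ) ^ j) := by
  rw [← conj_b_pow]
  group

private lemma b_pow_neg (p d e f : ℕ) (hp : 0 < p) (j : ℕ) :
    ((M1b p d e f) ^ j)⁻¹ = (M1b p d e f) ^ (j * (p ^ d - 1)) := by
  have hpd : 1 ≤ p ^ d := Nat.one_le_pow _ _ hp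
  have h2 : j * (p ^ d - 1) + j = j * p ^ d := by
    calc j * (p ^ d - 1) + j = j * ((p ^ d - 1) + 1) := by ring
      _ = j * p ^ d := by rw [Nat.sub_add_cancel hpd]
  have h1 : (M1b p d e f) ^ (j * (p ^ d - 1)) * (M1b p d e f) ^ j = 1 := by
    rw [← pow_add, h2, mul_comm j, pow_mul, M1rel_b, one_pow]
  exact (eq_inv_of_mul_eq_one_left h1).symm

private lemma M1_nf (p d e f : ℕ) (hp : 0 < p) (g : M1 p d e f) :
    ∃ (j : ℕ) (i : ℤ), g = (M1b p d e f) ^ j * (M1a p d e f) ^ i := by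
  let H : Subgroup (M1 p d e f) :=
    { carrier := {g | ∃ (j : ℕ) (i : ℤ), g = (M1b p d e f) ^ j * (M1a p d e f) ^ i}
      one_mem' := ⟨0, 0, by simp⟩
      mul_mem' := by
        rintro x y ⟨j, i, rfl⟩ ⟨l, k, rfl⟩
        refine ⟨j + l, i * ((1 + p ^ f : ℕ) : ℤ) ^ l + k, ?_⟩
        calc (M1b p d e f) ^ j * (M1a p d e f) ^ i * ((M1b p d e f) ^ l * (M1a p d e f) ^ k)
            = (M1b p d e f) ^ j * ((M1a p d e f) ^ i * (M1b p d e f) ^ l) * (M1a p d e f) ^ k := by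
              group
          _ = (M1b p d e f) ^ j * ((M1b p d e f) ^ l
              * (M1a p d e f) ^ (i * ((1 + p ^ f : ℕ) : ℤ) ^ l)) * (M1a p d e f) ^ k := by
              rw [swap_ab]
          _ = (M1b p d e f) ^ (j + l)
              * (M1a p d e f) ^ (i * ((1 + p ^ f : ℕ) : ℤ) ^ l + k) := by
              rw [pow_add, zpow_add]
              group
      inv_mem' := by
        rintro x ⟨j, i, rfl⟩
        refine ⟨j * (p ^ d - 1), -i * ((1 + p ^ f : ℕ) : ℤ) ^ (j * (p ^ d - 1)), ?_⟩
        calc ((M1b p d e f) ^ j * (M1a p d e f) ^ i)⁻¹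
            = (M1a p d e f) ^ (-i) * ((M1b p d e f) ^ j)⁻¹ := by
              rw [mul_inv_rev, zpow_neg]
          _ = (M1a p d e f) ^ (-i) * (M1b p d e f) ^ (j * (p ^ d - 1)) := by
              rw [b_pow_neg p d e f hp]
          _ = (M1b p d e f) ^ (j * (p ^ d - 1))
              * (M1a p d e f) ^ (-i * ((1 + p ^ f : ℕ) : ℤ) ^ (j * (p ^ d - 1))) := by
              rw [swap_ab] }
  exact PresentedGroup.generated_by _ H
    (fun idx => by
      fin_cases idx
      · exact ⟨0, 1, by simp [M1a]⟩
      · exact ⟨1, 0, by simp [M1b]⟩) g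

private lemma M1_pow_formula (p d e f : ℕ) (j : ℕ) (i : ℤ) (m : ℕ) :
    ((M1b p d e f) ^ j * (M1a p d e f) ^ i) ^ m
      = (M1b p d e f) ^ (j * m)
        * (M1a p d e f) ^ (i * ∑ t ∈ Finset.range m, (((1 + p ^ f : ℕ) : ℤ) ^ j) ^ t) := by
  induction m with
  | zero => simp
  | succ m ih =>
    rw [pow_succ, ih]
    have hE : i * (∑ t ∈ Finset.range m, (((1 + p ^ f : ℕ) : ℤ) ^ j) ^ t)
        * ((1 + p ^ f : ℕ) : ℤ) ^ j + i
        = i * ∑ t ∈ Finset.range (m+1), (((1 + p ^ f : ℕ) : ℤ) ^ j) ^ t := by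
      rw [geom_sum_succ]
      ring
    calc (M1b p d e f) ^ (j*m)
          * (M1a p d e f) ^ (i * ∑ t ∈ Finset.range m, (((1 + p ^ f : ℕ) : ℤ) ^ j) ^ t)
          * ((M1b p d e f) ^ j * (M1a p d e f) ^ i)
        = (M1b p d e f) ^ (j*m)
          * ((M1a p d e f) ^ (i * ∑ t ∈ Finset.range m, (((1 + p ^ f : ℕ) : ℤ) ^ j) ^ t)
            * (M1b p d e f) ^ j) * (M1a p d e f) ^ i := by group
      _ = (M1b p d e f) ^ (j*m) * ((M1b p d e f) ^ j
          * (M1a p d e f) ^ (i * (∑ t ∈ Finset.range m, (((1 + p ^ f : ℕ) : ℤ) ^ j) ^ t)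
            * ((1 + p ^ f : ℕ) : ℤ) ^ j)) * (M1a p d e f) ^ i := by rw [swap_ab]
      _ = (M1b p d e f) ^ (j*(m+1))
          * (M1a p d e f) ^ (i * (∑ t ∈ Finset.range m, (((1 + p ^ f : ℕ) : ℤ) ^ j) ^ t)
            * ((1 + p ^ f : ℕ) : ℤ) ^ j + i) := by
          rw [Nat.mul_succ, pow_add, zpow_add]
          group
      _ = _ := by rw [hE]

private lemma zpow_eq_of_dvd {G : Type*} [Group G] {g : G} {N : ℕ} (hg : g ^ N = 1)
    {x y : ℤ} (h : (N : ℤ) ∣ x - y) : g ^ x = g ^ y := by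
  obtain ⟨t, ht⟩ := h
  have hx : x = y + N * t := by linarith
  rw [hx, zpow_add, zpow_mul, zpow_natCast, hg, one_zpow, mul_one]

-- separation: if a^m = 1 then p^e ∣ m
private lemma M1_a_sep (p d e f : ℕ) (hp : p.Prime) (hodd : Odd p)
    (hf : 0 < f) (hedf : e ≤ d + f) {m : ℤ} (h : (M1a p d e f) ^ m = 1) :
    (p : ℤ) ^ e ∣ m := by
  haveI : NeZero (p ^ e) := ⟨pow_ne_zero _ hp.pos.ne'⟩
  set R := ZMod (p ^ e) with hR
  have h0 : ((p : R)) ^ (f + d) = 0 := by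
    have : ((p ^ (f + d) : ℕ) : R) = 0 :=
      (ZMod.natCast_eq_zero_iff _ _).2 (pow_dvd_pow p (by omega))
    push_cast at this
    exact this
  have hU1 : ((1 : R) + (p : R) ^ f) ^ (p ^ d) = 1 := by
    obtain ⟨c, hc, -⟩ := rpow hp hodd hf (1 : ℤ) d
    rw [mul_one] at hc
    have hcast : ((1:R) + (p:R)^f)^(p^d) = 1 + (p:R)^(f+d) * (c:R) := by
      have := congrArg (Int.cast : ℤ → ZMod (p ^ e)) hc
      push_cast at this
      exact this
    rw [h0] at hcast
    simpa using hcast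
  have hu : IsUnit ((1 : R) + (p : R) ^ f) :=
    IsUnit.of_pow_eq_one hU1 (pow_ne_zero _ hp.pos.ne')
  set U : Rˣ := hu.unit with hU
  have hUval : (U : R) = (1 : R) + (p : R) ^ f := hu.unit_spec
  have hUpow : U ^ (p ^ d) = 1 := by
    ext
    rw [Units.val_pow_eq_pow_val, hUval, hU1, Units.val_one]
  set σa : Equiv.Perm R := Equiv.addLeft (1 : R) with hσa
  set σb : Equiv.Perm R := MulAction.toPermHom Rˣ R U⁻¹ with hσb
  set F : Fin 2 → Equiv.Perm R := ![σa, σb] with hF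
  have hrels : ∀ r ∈ M1rels p d e f, FreeGroup.lift F r = 1 := by
    intro r hr
    rcases hr with rfl | hr
    · rw [map_pow, FreeGroup.lift_apply_of]
      show σa ^ p ^ e = 1
      rw [hσa, Equiv.nsmul_addLeft]
      have : ((p ^ e : ℕ) : R) = 0 := by simp
      rw [nsmul_eq_mul, mul_one, this, Equiv.addLeft_zero]
    rcases hr with rfl | hr
    · rw [map_pow, FreeGroup.lift_apply_of]
      show σb ^ p ^ d = 1
      rw [hσb, ← map_pow, inv_pow, hUpow, inv_one, map_one]
    rcases hr with rfl
    · simp only [map_mul, map_inv, map_pow, FreeGroup.lift_apply_of]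
      show σb⁻¹ * σa * σb * (σa ^ (1 + p ^ f))⁻¹ = 1
      rw [mul_inv_eq_one]
      have hb' : σb⁻¹ = MulAction.toPermHom Rˣ R U := by rw [hσb, ← map_inv, inv_inv]
      ext x
      rw [Equiv.Perm.mul_apply, Equiv.Perm.mul_apply, hb', hσa, Equiv.nsmul_addLeft]
      show U • ((1:R) + (σb x)) = (1 + p ^ f : ℕ) • (1:R) + x
      rw [hσb]
      show U • ((1:R) + U⁻¹ • x) = (1 + p ^ f : ℕ) • (1:R) + x
      rw [smul_add, smul_inv_smul, nsmul_eq_mul, mul_one]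
      have hU1smul : U • (1:R) = (U:R) := by rw [Units.smul_def, smul_eq_mul, mul_one]
      rw [hU1smul, hUval]
      push_cast
      ring
  have hπa : PresentedGroup.toGroup hrels (M1a p d e f) = σa := by
    simpa [M1a, hF] using PresentedGroup.toGroup.of hrels (x := (0 : Fin 2))
  have hone : PresentedGroup.toGroup hrels ((M1a p d e f) ^ m) = 1 := by rw [h, map_one]
  rw [map_zpow, hπa, hσa, Equiv.zsmul_addLeft] at hone
  have h2 : (m • (1:R)) = 0 := by
    have := congrArg (fun σ : Equiv.Perm R => σ 0) hone
    simpa using this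
  have h3 : ((m : R)) = 0 := by rwa [zsmul_eq_mul, mul_one] at h2
  have h4 := (ZMod.intCast_zmod_eq_zero_iff_dvd m (p ^ e)).1 h3
  push_cast at h4
  exact h4

private lemma main_dvd {p e f : ℕ} (hp : p.Prime) (hodd : Odd p) (hf : 0 < f) (hfe : f ≤ e)
    (i k : ℤ) (j l : ℕ) :
    (p:ℤ)^e ∣ (i * (1+(p:ℤ)^f)^l + k)
        * (∑ t ∈ Finset.range (p^(e-f)), ((1+(p:ℤ)^f)^(j+l))^t)
      - (i * (∑ t ∈ Finset.range (p^(e-f)), ((1+(p:ℤ)^f)^j)^t) * (1+(p:ℤ)^f)^(l*p^(e-f))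
         + k * (∑ t ∈ Finset.range (p^(e-f)), ((1+(p:ℤ)^f)^l)^t)) := by
  set r : ℤ := 1+(p:ℤ)^f with hr
  set n : ℕ := p^(e-f) with hn
  have hn1 : 1 ≤ n := Nat.one_le_pow _ _ hp.pos
  have hT : ∀ s : ℕ, (p:ℤ)^e ∣ (∑ t ∈ Finset.range n, (r^s)^t) - n := by
    intro s
    obtain ⟨c, hc⟩ : (p:ℤ)^f ∣ r^s - 1 := by
      have h := sub_dvd_pow_sub_pow r 1 s
      rw [one_pow] at h
      have : r - 1 = (p:ℤ)^f := by rw [hr]; ring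
      rwa [this] at h
    have hrs : r^s = 1 + (p:ℤ)^f * c := by linarith
    have hgk := geomKey hp hodd hf c (e-f)
    rw [Nat.add_sub_cancel' hfe] at hgk
    rw [hrs]
    have hcast : ((n:ℕ):ℤ) = (p:ℤ)^(e-f) := by rw [hn]; push_cast; ring
    rw [← hn, ← hcast] at hgk
    exact hgk
  have hrln : r^(l*n) = r^l * r^(l*(n-1)) := by
    rw [← pow_add]
    congr 1
    conv_lhs => rw [show n = (n-1)+1 from (Nat.succ_pred_eq_of_pos hn1).symm]
    rw [Nat.mul_succ]
    ring
  obtain ⟨A, hA⟩ := hT (j+l)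
  obtain ⟨B, hB⟩ := hT j
  obtain ⟨Cc, hC⟩ := hT l
  have hnE : ∃ Ez : ℤ, (n:ℤ) * (r^(l*(n-1)) - 1) = (p:ℤ)^e * Ez := by
    obtain ⟨c2, hc2⟩ : (p:ℤ)^f ∣ r^(l*(n-1)) - 1 := by
      have h := sub_dvd_pow_sub_pow r 1 (l*(n-1))
      rw [one_pow] at h
      have : r - 1 = (p:ℤ)^f := by rw [hr]; ring
      rwa [this] at h
    refine ⟨c2, ?_⟩
    rw [hc2]
    have hcast : (n:ℤ) = (p:ℤ)^(e-f) := by rw [hn]; push_cast; ring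
    rw [hcast, ← mul_assoc, ← pow_add]
    congr 2
    omega
  obtain ⟨Ez, hE⟩ := hnE
  have hA' : (∑ t ∈ Finset.range n, (r^(j+l))^t) = (n:ℤ) + (p:ℤ)^e * A := by linarith
  have hB' : (∑ t ∈ Finset.range n, (r^j)^t) = (n:ℤ) + (p:ℤ)^e * B := by linarith
  have hC' : (∑ t ∈ Finset.range n, (r^l)^t) = (n:ℤ) + (p:ℤ)^e * Cc := by linarith
  refine ⟨(i*r^l + k)*A - i*(r^l*r^(l*(n-1)))*B - k*Cc - i*r^l*Ez, ?_⟩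
  rw [hrln, hA', hB', hC']
  linear_combination (-(i*r^l)) * hE

private lemma M1_mul_nf (p d e f : ℕ) (j l : ℕ) (i k : ℤ) :
    (M1b p d e f) ^ j * (M1a p d e f) ^ i * ((M1b p d e f) ^ l * (M1a p d e f) ^ k)
      = (M1b p d e f) ^ (j + l) * (M1a p d e f) ^ (i * ((1 + p ^ f : ℕ) : ℤ) ^ l + k) := by
  calc (M1b p d e f) ^ j * (M1a p d e f) ^ i * ((M1b p d e f) ^ l * (M1a p d e f) ^ k)
      = (M1b p d e f) ^ j * ((M1a p d e f) ^ i * (M1b p d e f) ^ l) * (M1a p d e f) ^ k := by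
        group
    _ = (M1b p d e f) ^ j * ((M1b p d e f) ^ l
        * (M1a p d e f) ^ (i * ((1 + p ^ f : ℕ) : ℤ) ^ l)) * (M1a p d e f) ^ k := by
        rw [swap_ab]
    _ = _ := by
        rw [pow_add, zpow_add]
        group


end Stmt4Aux

/-- For an odd prime `p` and positive `d, e, f` with `f ≤ e ≤ d + f`, the
group `G = M₁(p,d,e,f)` is `p^(e-f)`-abelian and its center is generated by `a^(p^(e-f))`
and `b^(p^(e-f))`. -/
theorem stmt_4 (p d e f : ℕ) (hp : p.Prime) (hodd : Odd p)
    (hd : 0 < d) (hf : 0 < f) (hfe : f ≤ e) (hedf : e ≤ d + f) :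
    (∀ x y : M1 p d e f, (x * y) ^ p ^ (e - f) = x ^ p ^ (e - f) * y ^ p ^ (e - f)) ∧
    Subgroup.center (M1 p d e f) =
      Subgroup.closure {M1a p d e f ^ p ^ (e - f), M1b p d e f ^ p ^ (e - f)} := by
  
  have ha1 := M1rel_a p d e f
  set n : ℕ := p ^ (e - f) with hn
  set a : M1 p d e f := M1a p d e f with haa
  set b : M1 p d e f := M1b p d e f with hbb
  set r : ℤ := ((1 + p ^ f : ℕ) : ℤ) with hr
  have hrcast : r = 1 + (p:ℤ)^f := by rw [hr]; push_cast; ring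
  have hncast : (n:ℤ) = (p:ℤ)^(e-f) := by rw [hn]; push_cast; ring
  have hrn : ∀ s : ℕ, r ^ s = (1+(p:ℤ)^f)^s := fun s => by rw [hrcast]
  constructor
  · -- p^(e-f)-abelian
    intro x y
    obtain ⟨j, i, rfl⟩ := M1_nf p d e f hp.pos x
    obtain ⟨l, k, rfl⟩ := M1_nf p d e f hp.pos y
    rw [M1_mul_nf, M1_pow_formula, M1_pow_formula, M1_pow_formula, M1_mul_nf]
    have hjl : (j + l) * n = j * n + l * n := by ring
    rw [hjl]
    congr 1
    apply zpow_eq_of_dvd ha1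
    have := main_dvd hp hodd hf hfe i k j l
    push_cast
    simp only [← hrn, ← hrcast] at this ⊢
    convert this using 2 <;> ring
  · -- center
    apply le_antisymm
    · -- center ≤ closure
      intro z hz
      obtain ⟨j, i, rfl⟩ := M1_nf p d e f hp.pos z
      -- commutation with b gives p^(e-f) ∣ i
      have hzb := Subgroup.mem_center_iff.mp hz b
      have hab : a ^ i * b = b * a ^ (i * r) := by
        have := swap_ab p d e f 1 i
        simpa [hr] using this
      have hstep : b ^ (j+1) * a ^ i = b ^ (j+1) * a ^ (i * r) := by
        calc b ^ (j+1) * a ^ i = b * (b ^ j * a ^ i) := by rw [pow_succ']; group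
          _ = (b ^ j * a ^ i) * b := hzb
          _ = b ^ j * (a ^ i * b) := by group
          _ = b ^ j * (b * a ^ (i * r)) := by rw [hab]
          _ = b ^ (j+1) * a ^ (i * r) := by rw [pow_succ]; group
      have hai : a ^ (i * r - i) = 1 := by
        have h5 : a ^ i = a ^ (i * r) := mul_left_cancel hstep
        rw [zpow_sub, ← h5, mul_inv_cancel]
      have hdvd1 : (p:ℤ)^e ∣ i * r - i := M1_a_sep p d e f hp hodd hf hedf hai
      have hdvd1' : (p:ℤ)^(e-f) * (p:ℤ)^f ∣ i * (p:ℤ)^f := by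
        rw [← pow_add]
        have h6 : e - f + f = e := by omega
        rw [h6]
        have : i * r - i = i * (p:ℤ)^f := by rw [hrcast]; ring
        rwa [this] at hdvd1
      have hdi : (p:ℤ)^(e-f) ∣ i :=
        (mul_dvd_mul_iff_right (pow_ne_zero f (show (p:ℤ) ≠ 0 by exact_mod_cast hp.pos.ne'))).mp
          hdvd1'
      -- commutation with a gives p^(e-f) ∣ j
      have hza := Subgroup.mem_center_iff.mp hz a
      have hba : a * b ^ j = b ^ j * a ^ (r ^ j) := by
        have := swap_ab p d e f j 1
        simpa [hr] using this
      have hstep2 : b ^ j * a ^ ((r:ℤ) ^ j + i) = b ^ j * a ^ (i + 1) := by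
        calc b ^ j * a ^ ((r:ℤ) ^ j + i) = (b ^ j * a ^ (r ^ j)) * a ^ i := by
              rw [zpow_add]; group
          _ = a * b ^ j * a ^ i := by rw [← hba]
          _ = a * (b ^ j * a ^ i) := by group
          _ = (b ^ j * a ^ i) * a := hza
          _ = b ^ j * a ^ (i + 1) := by rw [zpow_add, zpow_one]; group
      have haj : a ^ ((r:ℤ) ^ j - 1) = 1 := by
        have h5 : a ^ ((r:ℤ) ^ j + i) = a ^ (i + 1) := mul_left_cancel hstep2
        have : (r:ℤ) ^ j - 1 = ((r:ℤ) ^ j + i) - (i + 1) := by ring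
        rw [this, zpow_sub, h5, mul_inv_cancel]
      have hdvd2 : (p:ℤ)^e ∣ (1+(p:ℤ)^f)^j - 1 := by
        have := M1_a_sep p d e f hp hodd hf hedf haj
        rwa [hrn] at this
      have hdj : p^(e-f) ∣ j := lteHard hp hodd hf hfe j hdvd2
      -- conclude membership
      obtain ⟨j₂, rfl⟩ := hdj
      obtain ⟨i₂, rfl⟩ : ∃ i₂ : ℤ, i = (n:ℤ) * i₂ := by
        obtain ⟨i₂, h⟩ := hdi
        exact ⟨i₂, by rw [h, hncast]⟩
      have hbmem : b ^ n ∈ Subgroup.closure {a ^ n, b ^ n} :=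
        Subgroup.subset_closure (Set.mem_insert_of_mem _ rfl)
      have hamem : a ^ n ∈ Subgroup.closure {a ^ n, b ^ n} :=
        Subgroup.subset_closure (Set.mem_insert _ _)
      have hb2 : b ^ (p^(e-f) * j₂) = (b ^ n) ^ j₂ := by rw [← pow_mul, hn]
      have ha2 : a ^ ((n:ℤ) * i₂) = (a ^ n) ^ i₂ := by
        rw [zpow_mul, zpow_natCast]
      rw [hb2, ha2]
      exact Subgroup.mul_mem _ (Subgroup.pow_mem _ hbmem j₂) (Subgroup.zpow_mem _ hamem i₂)
    · -- closure ≤ center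
      rw [Subgroup.closure_le]
      intro x hx
      have hca : Commute (a ^ n) a := ((Commute.refl a).pow_left n)
      have h6 : (p:ℤ)^(e-f) * (p:ℤ)^f = (p:ℤ)^e := by rw [← pow_add]; congr 1; omega
      have hcb : Commute (a ^ n) b := by
        have hswap := swap_ab p d e f 1 ((n:ℕ):ℤ)
        rw [pow_one, pow_one] at hswap
        have heq : a ^ ((n:ℤ) * ((1 + p ^ f : ℕ):ℤ)) = a ^ ((n:ℤ)) := by
          apply zpow_eq_of_dvd ha1
          have hh : (n:ℤ) * ((1 + p ^ f : ℕ):ℤ) - (n:ℤ) = ((p^e:ℕ):ℤ) := by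
            rw [hncast]
            push_cast
            calc (p:ℤ)^(e-f) * (1+(p:ℤ)^f) - (p:ℤ)^(e-f) = (p:ℤ)^(e-f)*(p:ℤ)^f := by ring
              _ = (p:ℤ)^e := h6
          rw [hh]
        have hcomm : a ^ ((n:ℤ)) * b = b * a ^ ((n:ℤ)) := by
          rw [hswap, heq]
        show (a ^ n) * b = b * (a ^ n)
        rw [← zpow_natCast a n]
        exact hcomm
      have hcbn_b : Commute (b ^ n) b := ((Commute.refl b).pow_left n)
      have hcbn_a : Commute (b ^ n) a := by
        have hconj := conj_b_pow p d e f n 1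
        have heq : a ^ ((1:ℤ) * r ^ n) = a ^ ((1:ℤ)) := by
          apply zpow_eq_of_dvd ha1
          obtain ⟨c, hc, -⟩ := rpow hp hodd hf (1:ℤ) (e-f)
          rw [mul_one] at hc
          have h7 : f + (e - f) = e := by omega
          rw [h7] at hc
          have hh : (1:ℤ) * r ^ n - 1 = ((p^e:ℕ):ℤ) * c := by
            rw [hrn, hn, hc]
            push_cast
            ring
          rw [hh]
          exact ⟨c, rfl⟩
        rw [heq] at hconj
        have : a * b ^ n = b ^ n * a := by
          have h7 : (b ^ n) * ((b ^ n)⁻¹ * a ^ (1:ℤ) * b ^ n) = (b ^ n) * a ^ (1:ℤ) := by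
            rw [hconj]
          rw [zpow_one] at h7
          calc a * b ^ n = b ^ n * ((b ^ n)⁻¹ * a * b ^ n) := by group
            _ = b ^ n * a := by
                have := h7
                group at this ⊢
                exact this
        exact this.symm
      -- x is one of the two generators
      have hcent : ∀ w : M1 p d e f, Commute w a → Commute w b → w ∈ Subgroup.center (M1 p d e f) := by
        intro w hwa hwb
        rw [Subgroup.mem_center_iff]
        intro g
        obtain ⟨j, i, rfl⟩ := M1_nf p d e f hp.pos g
        exact (((hwb.pow_right j).mul_right (hwa.zpow_right i))).symm
      rcases hx with rfl | hx
      · exact hcent _ hca hcb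
      · rcases hx with rfl
        exact hcent _ hcbn_a hcbn_b
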